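/- arXiv:1703.09036 — 2 statements merged into one kernel-verified Lean document; each statement's English description precedes it below -/
import Mathlib

section
/- For independent Bernoulli random variables, the Harris–FKG inequality for decreasing events: if A and B are both decreasing events in a finite product of independent Bernoulli measures on {0,1}^E, then P(A ∩ B) ≥ P(A)·P(B). -/
open MeasureTheory
open scoped ENNReal NNReal

/-- Harris–FKG inequality for decreasing events: if `A` and `B` are decreasing events
in a finite product of independent Bernoulli measures on `{0,1}^E`, then
`P(A ∩ B) ≥ P(A)·P(B)`. -/
theorem harris_fkg_decreasing {E : Type*} [Fintype E] (p : E → ℝ≥0∞) (hp : ∀ e, p e ≤ 1)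
    (A B : Set (E → Bool))
    (hA : ∀ ω ω' : E → Bool, ω' ≤ ω → ω ∈ A → ω' ∈ A)
    (hB : ∀ ω ω' : E → Bool, ω' ≤ ω → ω ∈ B → ω' ∈ B) :
    (Measure.pi fun e => (PMF.bernoulli (p e).toNNReal (by simpa using ENNReal.toNNReal_mono ENNReal.one_ne_top (hp e))).toMeasure) A *
        (Measure.pi fun e => (PMF.bernoulli (p e).toNNReal (by simpa using ENNReal.toNNReal_mono ENNReal.one_ne_top (hp e))).toMeasure) B ≤
      (Measure.pi fun e => (PMF.bernoulli (p e).toNNReal (by simpa using ENNReal.toNNReal_mono ENNReal.one_ne_top (hp e))).toMeasure) (A ∩ B) := by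
  classical
  set ν := Measure.pi fun e => (PMF.bernoulli (p e).toNNReal (by simpa using ENNReal.toNNReal_mono ENNReal.one_ne_top (hp e))).toMeasure with hν
  -- weights
  set q : E → Bool → ℝ≥0 := fun e b => ((PMF.bernoulli (p e).toNNReal (by simpa using ENNReal.toNNReal_mono ENNReal.one_ne_top (hp e))) b).toNNReal with hq
  set m : (E → Bool) → ℝ≥0 := fun ω => ∏ e, q e (ω e) with hm
  have hfin : ∀ e b, ((PMF.bernoulli (p e).toNNReal (by simpa using ENNReal.toNNReal_mono ENNReal.one_ne_top (hp e))) b) ≠ ∞ := fun e b =>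
    (PMF.bernoulli (p e).toNNReal (by simpa using ENNReal.toNNReal_mono ENNReal.one_ne_top (hp e))).apply_ne_top b
  have hsingle : ∀ ω : E → Bool, ν {ω} = (m ω : ℝ≥0∞) := by
    intro ω
    rw [hν, ← Set.univ_pi_singleton, Measure.pi_pi]
    rw [hm, ENNReal.coe_finset_prod]
    refine Finset.prod_congr rfl fun e _ => ?_
    rw [PMF.toMeasure_apply_singleton _ _ (measurableSet_singleton _), hq,
      ENNReal.coe_toNNReal (hfin e (ω e))]
  have key : ∀ S : Set (E → Bool),
      ν S = ((∑ ω ∈ Finset.univ.filter (· ∈ S), m ω : ℝ≥0) : ℝ≥0∞) := by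
    intro S
    have hS : S = ⋃ ω ∈ Finset.univ.filter (· ∈ S), ({ω} : Set (E → Bool)) := by
      ext ω; simp
    conv_lhs => rw [hS]
    rw [measure_biUnion_finset]
    · rw [ENNReal.coe_finset_sum]
      exact Finset.sum_congr rfl fun ω _ => hsingle ω
    · intro x _ y _ hxy
      simp [Set.disjoint_singleton, hxy]
    · exact fun ω _ => measurableSet_singleton ω
  -- total mass is 1
  have htot : (∑ ω, m ω : ℝ≥0) = 1 := by
    have : ν Set.univ = 1 := measure_univ
    rw [key Set.univ] at this
    simp only [Set.mem_univ, Finset.filter_true] at this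
    exact_mod_cast this
  -- apply FKG on the order dual
  set f : (E → Bool)ᵒᵈ → ℝ≥0 := fun ω => if OrderDual.ofDual ω ∈ A then 1 else 0 with hf
  set g : (E → Bool)ᵒᵈ → ℝ≥0 := fun ω => if OrderDual.ofDual ω ∈ B then 1 else 0 with hg
  set μ : (E → Bool)ᵒᵈ → ℝ≥0 := fun ω => m (OrderDual.ofDual ω) with hμ
  have hfmono : Monotone f := by
    intro a b hab
    simp only [hf]
    by_cases ha : OrderDual.ofDual a ∈ A
    · have hb : OrderDual.ofDual b ∈ A := hA (OrderDual.ofDual a) (OrderDual.ofDual b) hab ha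
      simp [ha, hb]
    · simp [ha]
  have hgmono : Monotone g := by
    intro a b hab
    simp only [hg]
    by_cases ha : OrderDual.ofDual a ∈ B
    · have hb : OrderDual.ofDual b ∈ B := hB (OrderDual.ofDual a) (OrderDual.ofDual b) hab ha
      simp [ha, hb]
    · simp [ha]
  have hμsup : ∀ a b : (E → Bool)ᵒᵈ, μ a * μ b ≤ μ (a ⊓ b) * μ (a ⊔ b) := by
    intro a b
    rw [hμ, hm]
    simp only
    rw [← Finset.prod_mul_distrib, ← Finset.prod_mul_distrib]
    refine le_of_eq (Finset.prod_congr rfl fun e _ => ?_)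
    cases hae : OrderDual.ofDual a e <;> cases hbe : OrderDual.ofDual b e <;>
      · have h1 : OrderDual.ofDual (a ⊓ b) e = (OrderDual.ofDual a e || OrderDual.ofDual b e) := rfl
        have h2 : OrderDual.ofDual (a ⊔ b) e = (OrderDual.ofDual a e && OrderDual.ofDual b e) := rfl
        rw [h1, h2, hae, hbe]
        simp [mul_comm]
  have hFKG := fkg f g μ (fun _ => zero_le) (fun _ => zero_le) (fun _ => zero_le)
    hfmono hgmono hμsup
  -- translate sums
  have hdual : ∀ F : (E → Bool) → ℝ≥0, (∑ ω : (E → Bool)ᵒᵈ, F (OrderDual.ofDual ω))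
      = ∑ ω : E → Bool, F ω :=
    fun F => Fintype.sum_equiv OrderDual.ofDual _ _ fun _ => rfl
  have hsumA : (∑ ω : (E → Bool)ᵒᵈ, μ ω * f ω)
      = ∑ ω ∈ Finset.univ.filter (· ∈ A), m ω :=
    calc (∑ ω : (E → Bool)ᵒᵈ, μ ω * f ω)
        = ∑ x : E → Bool, m x * (if x ∈ A then 1 else 0) :=
          hdual (fun x => m x * (if x ∈ A then 1 else 0))
      _ = ∑ ω ∈ Finset.univ.filter (· ∈ A), m ω := by
          rw [Finset.sum_filter]
          exact Finset.sum_congr rfl fun ω _ => by by_cases h : ω ∈ A <;> simp [h]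
  have hsumB : (∑ ω : (E → Bool)ᵒᵈ, μ ω * g ω)
      = ∑ ω ∈ Finset.univ.filter (· ∈ B), m ω :=
    calc (∑ ω : (E → Bool)ᵒᵈ, μ ω * g ω)
        = ∑ x : E → Bool, m x * (if x ∈ B then 1 else 0) :=
          hdual (fun x => m x * (if x ∈ B then 1 else 0))
      _ = ∑ ω ∈ Finset.univ.filter (· ∈ B), m ω := by
          rw [Finset.sum_filter]
          exact Finset.sum_congr rfl fun ω _ => by by_cases h : ω ∈ B <;> simp [h]
  have hsumAB : (∑ ω : (E → Bool)ᵒᵈ, μ ω * (f ω * g ω))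
      = ∑ ω ∈ Finset.univ.filter (· ∈ A ∩ B), m ω :=
    calc (∑ ω : (E → Bool)ᵒᵈ, μ ω * (f ω * g ω))
        = ∑ x : E → Bool, m x * ((if x ∈ A then 1 else 0) * (if x ∈ B then 1 else 0)) :=
          hdual (fun x => m x * ((if x ∈ A then 1 else 0) * (if x ∈ B then 1 else 0)))
      _ = ∑ ω ∈ Finset.univ.filter (· ∈ A ∩ B), m ω := by
          rw [Finset.sum_filter]
          refine Finset.sum_congr rfl fun ω _ => ?_
          by_cases h1 : ω ∈ A <;> by_cases h2 : ω ∈ B <;>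
            simp [h1, h2, Set.mem_inter_iff]
  have hsumT : (∑ ω : (E → Bool)ᵒᵈ, μ ω) = 1 := (hdual m).trans htot
  rw [hsumA, hsumB, hsumAB, hsumT, one_mul] at hFKG
  rw [key A, key B, key (A ∩ B), ← ENNReal.coe_mul, ENNReal.coe_le_coe]
  exact hFKG.trans (le_of_eq (by congr))
end

section
/- Upper bound on accessibility probability: define recursively α_{ij}(t) = 1 − ∏_{ℓ=1}^{N} (1 − α_{iℓ}(t−1) p_{ℓj}(t)) with α_{ij}(1) = p_{ij}(1) and the convention α_{ii}(t) = 1 (waiting at a node is always possible, i.e., p_{ℓℓ}(t) = 1). Then for all nodes i, j and all T ≥ 1, P(i →^T j) ≤ α_{ij}(T). -/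
open MeasureTheory
open scoped ENNReal

/-- Configuration space of a random temporal network on `N` nodes and `T` time slots. -/
abbrev TempConfig (N T : ℕ) := Fin N × Fin N × Fin T → Bool

/-- Product Bernoulli measure: edge `(u,v)` is open at slot `t` with probability `p u v t`,
independently of everything else. -/
noncomputable def tempMeasure (N T : ℕ) (p : Fin N → Fin N → ℕ → ℝ≥0∞)
    (hp : ∀ u v t, p u v t ≤ 1) : Measure (TempConfig N T) :=
  Measure.pi fun e => (PMF.bernoulli (p e.1 e.2.1 e.2.2).toNNReal
    (by simpa using (ENNReal.toNNReal_le_toNNReal (ne_top_of_le_ne_top ENNReal.one_ne_top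
      (hp e.1 e.2.1 e.2.2)) ENNReal.one_ne_top).2 (hp e.1 e.2.1 e.2.2))).toMeasure

/-- `j` is accessible from `i` within the first `t` slots (waiting allowed). -/
def TAccess {N T : ℕ} (i j : Fin N) (t : ℕ) (ω : TempConfig N T) : Prop :=
  ∃ f : ℕ → Fin N, f 0 = i ∧ f t = j ∧
    ∀ s : Fin T, (s : ℕ) < t →
      f (s : ℕ) = f ((s : ℕ) + 1) ∨ ω (f (s : ℕ), f ((s : ℕ) + 1), s) = true

/-- The recursive quantity `α_{ij}(t)` (0-indexed: `alphaE p i t j` is `α_{ij}` after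
`t+1` slots): `α_{ij}(1) = p_{ij}(1)` and
`α_{ij}(t+1) = 1 - ∏_ℓ (1 - α_{iℓ}(t) p_{ℓj}(t+1))`. -/
noncomputable def alphaE {N : ℕ} (p : Fin N → Fin N → ℕ → ℝ≥0∞) (i : Fin N) :
    ℕ → Fin N → ℝ≥0∞
  | 0, j => p i j 0
  | t + 1, j => 1 - ∏ ℓ : Fin N, (1 - alphaE p i t ℓ * p ℓ j (t + 1))

/-! ### Auxiliary general lemmas about product Bernoulli weights on `E → Bool` -/

open Finset
open scoped NNReal Classical

noncomputable section AuxGen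

variable {E : Type} [Fintype E] [DecidableEq E]

/-- Product Bernoulli weight. -/
def wtN (v : E → Bool → ℝ≥0) (ω : E → Bool) : ℝ≥0 := ∏ e, v e (ω e)

/-- indicator -/
def indN (A : Set (E → Bool)) (ω : E → Bool) : ℝ≥0 := if ω ∈ A then 1 else 0

/-- probability as a finite sum -/
def prN (v : E → Bool → ℝ≥0) (A : Set (E → Bool)) : ℝ≥0 := ∑ ω, wtN v ω * indN A ω

variable {v : E → Bool → ℝ≥0}

lemma indN_le_one (A : Set (E → Bool)) (ω : E → Bool) : indN A ω ≤ 1 := by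
  unfold indN; split <;> simp

lemma indN_mem {A : Set (E → Bool)} {ω} (h : ω ∈ A) : indN A ω = 1 := if_pos h
lemma indN_not_mem {A : Set (E → Bool)} {ω} (h : ω ∉ A) : indN A ω = 0 := if_neg h

lemma wtN_total (hv : ∀ e, v e false + v e true = 1) : ∑ ω, wtN v ω = 1 := by
  unfold wtN
  classical
  rw [← Fintype.piFinset_univ, ← Finset.prod_univ_sum]
  refine Finset.prod_eq_one fun e _ => ?_
  rw [Fintype.sum_bool, add_comm]
  exact hv e

lemma prN_le_one (hv : ∀ e, v e false + v e true = 1) (A : Set (E → Bool)) :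
    prN v A ≤ 1 := by
  calc prN v A ≤ ∑ ω, wtN v ω := by
        refine Finset.sum_le_sum fun ω _ => ?_
        exact mul_le_of_le_one_right zero_le (indN_le_one A ω)
    _ = 1 := wtN_total hv

lemma prN_mono {A B : Set (E → Bool)} (h : A ⊆ B) : prN v A ≤ prN v B := by
  refine Finset.sum_le_sum fun ω _ => ?_
  refine mul_le_mul_right ?_ _
  unfold indN
  split
  · rw [if_pos (h (by assumption))]
  · simp

lemma prN_add_compl (hv : ∀ e, v e false + v e true = 1) (A : Set (E → Bool)) :
    prN v A + prN v Aᶜ = 1 := by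
  unfold prN
  rw [← Finset.sum_add_distrib]
  rw [← wtN_total hv]
  refine Finset.sum_congr rfl fun ω _ => ?_
  rw [← mul_add]
  by_cases h : ω ∈ A
  · rw [indN_mem h, indN_not_mem (by simpa using h)]; ring
  · rw [indN_not_mem h, indN_mem (by simpa using h)]; ring

/-- Integrating out one coordinate. -/
lemma integrateN (hv : ∀ e, v e false + v e true = 1) (e₀ : E)
    (K : (E → Bool) → Bool → ℝ≥0)
    (hK : ∀ ω b c, K (Function.update ω e₀ b) c = K ω c) :
    ∑ ω, wtN v ω * K ω (ω e₀) =
      ∑ ω, wtN v ω * (v e₀ false * K ω false + v e₀ true * K ω true) := by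
  classical
  have split : ∀ (F : (E → Bool) → ℝ≥0),
      ∑ ω, F ω = ∑ x : Bool × ({ e // e ≠ e₀ } → Bool),
        F ((Equiv.funSplitAt e₀ Bool).symm x) := by
    intro F
    exact (Equiv.sum_comp (Equiv.funSplitAt e₀ Bool).symm F).symm
  have symm_e₀ : ∀ (b : Bool) (ρ : { e // e ≠ e₀ } → Bool),
      (Equiv.funSplitAt e₀ Bool).symm (b, ρ) e₀ = b := by
    intro b ρ; simp [Equiv.funSplitAt, Equiv.piSplitAt]
  have symm_upd : ∀ (b c : Bool) (ρ : { e // e ≠ e₀ } → Bool),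
      (Equiv.funSplitAt e₀ Bool).symm (c, ρ) =
        Function.update ((Equiv.funSplitAt e₀ Bool).symm (b, ρ)) e₀ c := by
    intro b c ρ
    funext e
    by_cases he : e = e₀
    · subst he; rw [Function.update_self, symm_e₀]
    · rw [Function.update_of_ne he]
      simp [Equiv.funSplitAt, Equiv.piSplitAt, he]
  set R : (E → Bool) → ℝ≥0 := fun ω => ∏ e ∈ univ.erase e₀, v e (ω e) with hR
  have wt_eq : ∀ ω, wtN v ω = v e₀ (ω e₀) * R ω := by
    intro ω; rw [hR]; exact (Finset.mul_prod_erase univ _ (mem_univ e₀)).symm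
  have R_upd : ∀ ω b, R (Function.update ω e₀ b) = R ω := by
    intro ω b
    refine Finset.prod_congr rfl fun e he => ?_
    rw [Function.update_of_ne (Finset.ne_of_mem_erase he)]
  rw [split, split]
  rw [Fintype.sum_prod_type, Fintype.sum_prod_type]
  conv_lhs => rw [Finset.sum_comm]
  conv_rhs => rw [Finset.sum_comm]
  refine Finset.sum_congr rfl fun ρ _ => ?_
  set ω₀ := (Equiv.funSplitAt e₀ Bool).symm (false, ρ) with hω₀
  have key : ∀ b, (Equiv.funSplitAt e₀ Bool).symm (b, ρ) = Function.update ω₀ e₀ b := by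
    intro b; exact symm_upd false b ρ
  have hwt : ∀ b : Bool, wtN v ((Equiv.funSplitAt e₀ Bool).symm (b, ρ)) = v e₀ b * R ω₀ := by
    intro b
    rw [wt_eq, symm_e₀, key b, R_upd]
  have hKb : ∀ b c : Bool, K ((Equiv.funSplitAt e₀ Bool).symm (b, ρ)) c = K ω₀ c := by
    intro b c; rw [key b, hK]
  rw [Fintype.sum_bool, Fintype.sum_bool]
  simp only [symm_e₀, hwt, hKb]
  have hsum : v e₀ true + v e₀ false = 1 := by rw [add_comm]; exact hv e₀
  trans R ω₀ * (v e₀ false * K ω₀ false + v e₀ true * K ω₀ true)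
  · ring
  · have : v e₀ true * R ω₀ * (v e₀ false * K ω₀ false + v e₀ true * K ω₀ true)
        + v e₀ false * R ω₀ * (v e₀ false * K ω₀ false + v e₀ true * K ω₀ true)
        = (v e₀ true + v e₀ false) * (R ω₀ * (v e₀ false * K ω₀ false + v e₀ true * K ω₀ true)) := by
      ring
    rw [this, hsum, one_mul]

lemma prN_coord (hv : ∀ e, v e false + v e true = 1) (e₀ : E) :
    prN v {ω | ω e₀ = true} = v e₀ true := by
  have h := integrateN hv e₀ (fun ω b => bif b then 1 else 0) (fun ω b c => rfl)
  unfold prN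
  have h1 : ∀ ω : E → Bool, indN {ω | ω e₀ = true} ω = (fun (ω : E → Bool) b => bif b then (1:ℝ≥0) else 0) ω (ω e₀) := by
    intro ω
    cases hb : ω e₀ <;> simp [indN, hb]
  calc ∑ ω, wtN v ω * indN {ω | ω e₀ = true} ω
      = ∑ ω, wtN v ω * (fun (ω : E → Bool) b => bif b then (1:ℝ≥0) else 0) ω (ω e₀) := by
        refine Finset.sum_congr rfl fun ω _ => by rw [h1]
    _ = ∑ ω, wtN v ω * (v e₀ false * 0 + v e₀ true * 1) := h
    _ = (∑ ω, wtN v ω) * (v e₀ false * 0 + v e₀ true * 1) := by rw [← Finset.sum_mul]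
    _ = v e₀ true := by rw [wtN_total hv]; simp

lemma my_fkg {α : Type} [Fintype α] [DistribLattice α] (μ f g : α → ℝ≥0)
    (hf : Antitone f) (hg : Antitone g)
    (hμ : ∀ a b : α, μ a * μ b ≤ μ (a ⊓ b) * μ (a ⊔ b)) :
    (∑ a, μ a * f a) * ∑ a, μ a * g a ≤ (∑ a, μ a) * ∑ a, μ a * (f a * g a) :=
  fkg (α := αᵒᵈ) (β := ℝ≥0) (f := fun a => f (OrderDual.ofDual a))
    (g := fun a => g (OrderDual.ofDual a)) (μ := fun a => μ (OrderDual.ofDual a))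
    (fun _ => zero_le) (fun _ => zero_le) (fun _ => zero_le)
    (fun a b hab => hf hab) (fun a b hab => hg hab)
    (fun a b => (hμ (OrderDual.ofDual a) (OrderDual.ofDual b)).trans_eq (mul_comm _ _))

lemma wtN_supermod (a b : E → Bool) :
    wtN v a * wtN v b = wtN v (a ⊓ b) * wtN v (a ⊔ b) := by
  unfold wtN
  rw [← Finset.prod_mul_distrib, ← Finset.prod_mul_distrib]
  refine Finset.prod_congr rfl fun e _ => ?_
  have ha : (a ⊓ b) e = a e ⊓ b e := rfl
  have hb : (a ⊔ b) e = a e ⊔ b e := rfl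
  rw [ha, hb]
  cases h1 : a e <;> cases h2 : b e <;> simp [mul_comm]

lemma harrisN {ι : Type} [DecidableEq ι] (hv : ∀ e, v e false + v e true = 1)
    (Y : ι → (E → Bool) → ℝ≥0) (hY : ∀ ℓ, Antitone (Y ℓ)) (s : Finset ι) :
    ∏ ℓ ∈ s, (∑ ω, wtN v ω * Y ℓ ω) ≤ ∑ ω, wtN v ω * ∏ ℓ ∈ s, Y ℓ ω := by
  classical
  induction s using Finset.induction_on with
  | empty => simp [wtN_total hv]
  | @insert k s hk ih =>
    rw [Finset.prod_insert hk]
    have step := my_fkg (wtN v) (Y k) (fun ω => ∏ ℓ ∈ s, Y ℓ ω) (hY k)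
      (fun x y hxy => by exact Finset.prod_le_prod' fun ℓ _ => hY ℓ hxy)
      (fun a b => (wtN_supermod a b).le)
    rw [wtN_total hv, one_mul] at step
    calc (∑ ω, wtN v ω * Y k ω) * ∏ ℓ ∈ s, (∑ ω, wtN v ω * Y ℓ ω)
        ≤ (∑ ω, wtN v ω * Y k ω) * ∑ ω, wtN v ω * ∏ ℓ ∈ s, Y ℓ ω :=
          mul_le_mul_right ih _
      _ ≤ ∑ ω, wtN v ω * (Y k ω * ∏ ℓ ∈ s, Y ℓ ω) := step
      _ = ∑ ω, wtN v ω * ∏ ℓ ∈ insert k s, Y ℓ ω := by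
          refine Finset.sum_congr rfl fun ω _ => by rw [Finset.prod_insert hk]

end AuxGen

/-! ### Bridge from `tempMeasure` to the finite weighted sum -/

noncomputable section Bridge

/-- The Bernoulli weight function associated to `p`. -/
def vOf {N T : ℕ} (p : Fin N → Fin N → ℕ → ℝ≥0∞) :
    (Fin N × Fin N × Fin T) → Bool → ℝ≥0 :=
  fun e b => bif b then (p e.1 e.2.1 e.2.2).toNNReal else 1 - (p e.1 e.2.1 e.2.2).toNNReal

lemma p_ne_top {N : ℕ} {p : Fin N → Fin N → ℕ → ℝ≥0∞} (hp : ∀ u v t, p u v t ≤ 1)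
    (u v : Fin N) (t : ℕ) : p u v t ≠ ∞ :=
  ne_top_of_le_ne_top ENNReal.one_ne_top (hp u v t)

lemma toNNReal_p_le_one {N : ℕ} {p : Fin N → Fin N → ℕ → ℝ≥0∞} (hp : ∀ u v t, p u v t ≤ 1)
    (u v : Fin N) (t : ℕ) : (p u v t).toNNReal ≤ 1 := by
  have := ENNReal.toNNReal_mono ENNReal.one_ne_top (hp u v t)
  simpa using this

lemma vOf_hv {N T : ℕ} {p : Fin N → Fin N → ℕ → ℝ≥0∞} (hp : ∀ u v t, p u v t ≤ 1) :
    ∀ e : Fin N × Fin N × Fin T, vOf p e false + vOf p e true = 1 := by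
  intro e
  simp only [vOf, cond_false, cond_true]
  exact tsub_add_cancel_of_le (toNNReal_p_le_one hp _ _ _)

lemma bernoulli_singleton {q : ℝ≥0∞} (hq : q ≤ 1) (hq' : q.toNNReal ≤ 1) (b : Bool) :
    (PMF.bernoulli q.toNNReal hq').toMeasure {b} = bif b then q else 1 - q := by
  rw [PMF.toMeasure_apply_singleton _ _ (measurableSet_singleton b)]
  have hq0 : q ≠ ∞ := ne_top_of_le_ne_top ENNReal.one_ne_top hq
  cases b <;> simp [PMF.bernoulli_apply, ENNReal.coe_toNNReal hq0]

lemma tempMeasure_singleton {N T : ℕ} (p : Fin N → Fin N → ℕ → ℝ≥0∞)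
    (hp : ∀ u v t, p u v t ≤ 1) (ω : TempConfig N T) :
    tempMeasure N T p hp {ω} = (wtN (vOf p) ω : ℝ≥0∞) := by
  rw [← Set.univ_pi_singleton ω]
  rw [tempMeasure, Measure.pi_pi]
  rw [wtN, ENNReal.coe_finset_prod]
  refine Finset.prod_congr rfl fun e _ => ?_
  refine (bernoulli_singleton (hp _ _ _) _ (ω e)).trans ?_
  cases hb : ω e
  · simp only [cond_false, vOf]
    rw [ENNReal.coe_sub, ENNReal.coe_one, ENNReal.coe_toNNReal (p_ne_top hp _ _ _)]
  · simp only [cond_true, vOf]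
    rw [ENNReal.coe_toNNReal (p_ne_top hp _ _ _)]

lemma tempMeasure_eq_prN {N T : ℕ} (p : Fin N → Fin N → ℕ → ℝ≥0∞)
    (hp : ∀ u v t, p u v t ≤ 1) (A : Set (TempConfig N T)) :
    tempMeasure N T p hp A = (prN (vOf p) A : ℝ≥0∞) := by
  classical
  have hAfin : A.Finite := Set.toFinite A
  have hA : A = ⋃ ω ∈ hAfin.toFinset, {ω} := by
    ext x
    simp only [Set.mem_iUnion, Set.Finite.mem_toFinset, Set.mem_singleton_iff]
    exact ⟨fun h => ⟨x, h, rfl⟩, fun ⟨y, hy, hxy⟩ => hxy ▸ hy⟩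
  have hsum : prN (vOf p) A = ∑ ω ∈ hAfin.toFinset, wtN (vOf p) ω := by
    rw [prN]
    rw [Finset.sum_congr rfl (fun (ω : TempConfig N T) _ => show wtN (vOf p) ω * indN A ω
        = if ω ∈ A then wtN (vOf p) ω else 0 by rw [indN]; split <;> simp)]
    rw [← Finset.sum_filter]
    refine Finset.sum_congr ?_ fun _ _ => rfl
    ext x
    simp only [Finset.mem_filter, Finset.mem_univ, true_and, Set.Finite.mem_toFinset]
  conv_lhs => rw [hA]
  rw [measure_biUnion_finset ?_ ?_]
  · rw [hsum, ENNReal.coe_finset_sum]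
    exact Finset.sum_congr rfl fun ω _ => tempMeasure_singleton p hp ω
  · intro x _ y _ hxy
    simp [Function.onFun, Set.disjoint_singleton, hxy]
  · intro ω _
    exact measurableSet_singleton ω

end Bridge

/-! ### The NNReal version of alpha and its relation to `alphaE` -/

noncomputable def alphaN {N : ℕ} (q : Fin N → Fin N → ℕ → ℝ≥0) (i : Fin N) :
    ℕ → Fin N → ℝ≥0
  | 0, j => q i j 0
  | t + 1, j => 1 - ∏ ℓ : Fin N, (1 - alphaN q i t ℓ * q ℓ j (t + 1))

lemma alphaN_coe {N : ℕ} (p : Fin N → Fin N → ℕ → ℝ≥0∞) (hp : ∀ u v t, p u v t ≤ 1)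
    (i : Fin N) (t : ℕ) (j : Fin N) :
    ((alphaN (fun u w s => (p u w s).toNNReal) i t j : ℝ≥0) : ℝ≥0∞) = alphaE p i t j := by
  induction t generalizing j with
  | zero =>
    rw [alphaN, alphaE, ENNReal.coe_toNNReal (p_ne_top hp _ _ _)]
  | succ t ih =>
    rw [alphaN, alphaE, ENNReal.coe_sub, ENNReal.coe_one, ENNReal.coe_finset_prod]
    congr 1
    refine Finset.prod_congr rfl fun ℓ _ => ?_
    rw [ENNReal.coe_sub, ENNReal.coe_one, ENNReal.coe_mul, ih,
      ENNReal.coe_toNNReal (p_ne_top hp _ _ _)]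

/-! ### Properties of TAccess -/

lemma TAccess_mono {N T : ℕ} {i j : Fin N} {t : ℕ} {ω ω' : TempConfig N T}
    (h : ω ≤ ω') (hA : TAccess i j t ω) : TAccess i j t ω' := by
  obtain ⟨f, h0, h1, hc⟩ := hA
  refine ⟨f, h0, h1, fun s hs => ?_⟩
  refine (hc s hs).imp id fun he => ?_
  have hle := h (f (s : ℕ), f ((s : ℕ) + 1), s)
  rw [he] at hle
  exact le_antisymm (Bool.le_true _) hle

lemma TAccess_update {N T : ℕ} {i ℓ : Fin N} {t : ℕ} {ω : TempConfig N T}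
    {e : Fin N × Fin N × Fin T} (he : t ≤ (e.2.2 : ℕ)) (b : Bool) :
    TAccess i ℓ t (Function.update ω e b) ↔ TAccess i ℓ t ω := by
  have hne : ∀ (s : Fin T), (s : ℕ) < t → ∀ u w : Fin N, (u, w, s) ≠ e := by
    intro s hs u w hEq
    have : s = e.2.2 := congrArg (fun x => x.2.2) hEq
    rw [this] at hs
    exact absurd (hs.trans_le he) (lt_irrefl _)
  constructor
  · rintro ⟨f, h0, h1, hc⟩
    refine ⟨f, h0, h1, fun s hs => ?_⟩
    refine (hc s hs).imp id fun hx => ?_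
    rwa [Function.update_of_ne (hne s hs _ _)] at hx
  · rintro ⟨f, h0, h1, hc⟩
    refine ⟨f, h0, h1, fun s hs => ?_⟩
    refine (hc s hs).imp id fun hx => ?_
    rwa [Function.update_of_ne (hne s hs _ _)]

/-! ### Main induction -/

set_option maxHeartbeats 1000000 in
theorem mainN {N T : ℕ} (p : Fin N → Fin N → ℕ → ℝ≥0∞)
    (hp : ∀ u v t, p u v t ≤ 1) (hself : ∀ ℓ : Fin N, ∀ t, p ℓ ℓ t = 1) (i : Fin N) :
    ∀ t, t < T → ∀ j, prN (vOf (T := T) p) {ω | TAccess i j (t + 1) ω}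
      ≤ alphaN (fun u w s => (p u w s).toNNReal) i t j := by
  classical
  set v := vOf (T := T) p with hv_def
  have hv : ∀ e : Fin N × Fin N × Fin T, v e false + v e true = 1 := vOf_hv hp
  set q : Fin N → Fin N → ℕ → ℝ≥0 := fun u w s => (p u w s).toNNReal with hq_def
  have hq1 : ∀ u w s, q u w s ≤ 1 := fun u w s => toNNReal_p_le_one hp u w s
  intro t
  induction t with
  | zero =>
    intro h0 j
    by_cases hij : i = j
    · subst hij
      have : alphaN q i 0 i = 1 := by
        rw [alphaN, hq_def]
        simp [hself]
      rw [this]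
      exact prN_le_one hv _
    · set e₀ : Fin N × Fin N × Fin T := (i, j, ⟨0, h0⟩) with he₀
      have hsub : {ω : TempConfig N T | TAccess i j 1 ω} ⊆ {ω | ω e₀ = true} := by
        rintro ω ⟨f, hf0, hf1, hc⟩
        have h := hc ⟨0, h0⟩ Nat.zero_lt_one
        rcases h with h | h
        · rw [hf0, hf1] at h
          exact absurd h hij
        · rw [hf0, hf1] at h
          exact h
      calc prN v {ω : TempConfig N T | TAccess i j 1 ω}
          ≤ prN v {ω | ω e₀ = true} := prN_mono hsub
        _ = v e₀ true := prN_coord hv e₀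
        _ = alphaN q i 0 j := by rw [alphaN]; rfl
  | succ t ih =>
    intro hT j
    have ht' : t < T := Nat.lt_of_succ_lt hT
    set st : Fin T := ⟨t + 1, hT⟩ with hst
    set A : Fin N → Set (TempConfig N T) := fun ℓ => {ω | TAccess i ℓ (t + 1) ω} with hA
    set D : Fin N → Set (TempConfig N T) := fun ℓ => {ω | ℓ = j ∨ ω (ℓ, j, st) = true} with hD
    set U : Set (TempConfig N T) := ⋃ ℓ, A ℓ ∩ D ℓ with hU
    set qq : Fin N → ℝ≥0 := fun ℓ => q ℓ j (t + 1) with hqq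
    set X : Fin N → TempConfig N T → ℝ≥0 := fun ℓ ω => 1 - indN (A ℓ) ω * indN (D ℓ) ω with hX
    set Y : Fin N → TempConfig N T → ℝ≥0 := fun ℓ ω => 1 - indN (A ℓ) ω * qq ℓ with hY
    have hIH : ∀ ℓ, prN v (A ℓ) ≤ alphaN q i t ℓ := fun ℓ => ih ht' ℓ
    have hindA : ∀ (u w ℓ : Fin N) (ω : TempConfig N T) (b : Bool),
        indN (A ℓ) (Function.update ω (u, w, st) b) = indN (A ℓ) ω := by
      intro u w ℓ ω b
      have hiff : Function.update ω (u, w, st) b ∈ A ℓ ↔ ω ∈ A ℓ := by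
        simp only [hA, Set.mem_setOf_eq]
        exact TAccess_update (t := t + 1) (e := (u, w, st)) (Nat.le_of_eq rfl) b
      simp only [indN]
      rw [hiff]
    have hindD : ∀ (ℓ k : Fin N), ℓ ≠ k → ∀ (ω : TempConfig N T) (b : Bool),
        indN (D ℓ) (Function.update ω (k, j, st) b) = indN (D ℓ) ω := by
      intro ℓ k hℓk ω b
      have hne : ((ℓ, j, st) : Fin N × Fin N × Fin T) ≠ (k, j, st) := by
        intro hEq; exact hℓk (congrArg Prod.fst hEq)
      have hiff : Function.update ω (k, j, st) b ∈ D ℓ ↔ ω ∈ D ℓ := by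
        simp only [hD, Set.mem_setOf_eq]
        constructor
        · rintro (h | h)
          · exact Or.inl h
          · right; rwa [Function.update_of_ne hne] at h
        · rintro (h | h)
          · exact Or.inl h
          · right; rwa [Function.update_of_ne hne]
      simp only [indN]
      rw [hiff]
    have hc1 : {ω : TempConfig N T | TAccess i j (t + 1 + 1) ω} ⊆ U := by
      rintro ω ⟨f, hf0, hf2, hc⟩
      refine Set.mem_iUnion.mpr ⟨f (t + 1),
        ⟨⟨f, hf0, rfl, fun s hs => hc s (Nat.lt_succ_of_lt hs)⟩, ?_⟩⟩
      have h := hc st (Nat.lt_succ_self (t + 1))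
      rcases h with h | h
      · exact Or.inl (h.trans hf2)
      · right
        rw [hf2] at h
        exact h
    have hc2 : prN v U + prN v Uᶜ = 1 := prN_add_compl hv U
    have hXind : ∀ ω, indN Uᶜ ω = ∏ ℓ, X ℓ ω := by
      intro ω
      by_cases hUmem : ω ∈ U
      · rw [indN_not_mem (Set.not_notMem.mpr hUmem)]
        obtain ⟨ℓ, hℓ⟩ := Set.mem_iUnion.mp hUmem
        symm
        refine Finset.prod_eq_zero (Finset.mem_univ ℓ) ?_
        simp only [hX]
        rw [indN_mem hℓ.1, indN_mem hℓ.2]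
        simp
      · rw [indN_mem hUmem]
        symm
        refine Finset.prod_eq_one fun ℓ _ => ?_
        have hnot : ω ∉ A ℓ ∩ D ℓ := fun h => hUmem (Set.mem_iUnion.mpr ⟨ℓ, h⟩)
        simp only [hX]
        by_cases hA1 : ω ∈ A ℓ
        · have hD1 : ω ∉ D ℓ := fun hD1 => hnot ⟨hA1, hD1⟩
          rw [indN_not_mem hD1]
          simp
        · rw [indN_not_mem hA1]
          simp
    have hc3 : prN v Uᶜ = ∑ ω, wtN v ω * ∏ ℓ, X ℓ ω :=
      Finset.sum_congr rfl fun ω _ => by rw [hXind]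
    have hvt : ∀ k : Fin N, v (k, j, st) true = qq k := fun k => rfl
    have hvf : ∀ k : Fin N, v (k, j, st) false = 1 - qq k := fun k => rfl
    have key : ∀ s : Finset (Fin N), j ∉ s →
        ∑ ω, wtN v ω * ((∏ ℓ ∈ s, Y ℓ ω) * ∏ ℓ ∈ sᶜ, X ℓ ω) = ∑ ω, wtN v ω * ∏ ℓ, X ℓ ω := by
      intro s
      induction s using Finset.induction_on with
      | empty => intro _; simp
      | @insert k s hk ihs =>
        intro hins
        have hjs : j ∉ s := fun h => hins (Finset.mem_insert_of_mem h)
        have hkj : k ≠ j := fun h => hins (h ▸ Finset.mem_insert_self k s)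
        rw [← ihs hjs]
        set K : TempConfig N T → Bool → ℝ≥0 := fun ω b =>
          ((∏ ℓ ∈ s, Y ℓ ω) * ∏ ℓ ∈ sᶜ.erase k, X ℓ ω) *
            (1 - indN (A k) ω * (bif b then 1 else 0)) with hK_def
        have hYupd : ∀ ℓ ω b, Y ℓ (Function.update ω (k, j, st) b) = Y ℓ ω := by
          intro ℓ ω b
          simp only [hY]
          rw [hindA k j ℓ ω b]
        have hXupd : ∀ ℓ, ℓ ≠ k → ∀ ω b, X ℓ (Function.update ω (k, j, st) b) = X ℓ ω := by
          intro ℓ hℓ ω b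
          simp only [hX]
          rw [hindA k j ℓ ω b, hindD ℓ k hℓ ω b]
        have hK : ∀ ω b c, K (Function.update ω (k, j, st) b) c = K ω c := by
          intro ω b c
          simp only [hK_def]
          rw [hindA k j k ω b]
          congr 1
          congr 1
          · exact Finset.prod_congr rfl fun ℓ _ => hYupd ℓ ω b
          · exact Finset.prod_congr rfl fun ℓ hℓ => hXupd ℓ (Finset.ne_of_mem_erase hℓ) ω b
        have hXkb : ∀ ω : TempConfig N T,
            X k ω = 1 - indN (A k) ω * (bif ω (k, j, st) then 1 else 0) := by
          intro ω
          simp only [hX]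
          congr 2
          cases hb : ω (k, j, st)
          · rw [indN_not_mem ?_]
            · rfl
            · rintro (h | h)
              · exact hkj h
              · rw [hb] at h; exact Bool.false_ne_true h
          · rw [indN_mem (Or.inr hb)]
            rfl
        have hrhs : ∑ ω, wtN v ω * ((∏ ℓ ∈ s, Y ℓ ω) * ∏ ℓ ∈ sᶜ, X ℓ ω)
            = ∑ ω, wtN v ω * K ω (ω (k, j, st)) := by
          refine Finset.sum_congr rfl fun ω _ => ?_
          congr 1
          rw [← Finset.mul_prod_erase sᶜ _ (Finset.mem_compl.mpr hk), hXkb ω]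
          simp only [hK_def]
          rw [mul_comm (1 - indN (A k) ω * (bif ω (k, j, st) then 1 else 0))
            (∏ ℓ ∈ sᶜ.erase k, X ℓ ω), ← mul_assoc]
        rw [hrhs, integrateN hv (k, j, st) K hK]
        refine Finset.sum_congr rfl fun ω _ => ?_
        congr 1
        rw [Finset.prod_insert hk, Finset.compl_insert]
        simp only [hK_def, cond_false, cond_true, mul_zero, tsub_zero, mul_one]
        set G : ℝ≥0 := (∏ ℓ ∈ s, Y ℓ ω) * ∏ ℓ ∈ sᶜ.erase k, X ℓ ω with hG
        have hYk : Y k ω = 1 - indN (A k) ω * qq k := by simp only [hY]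
        rw [hvt, hvf, hYk]
        -- goal : (1 - indN (A k) ω * qq k) * ∏_s Y * ∏_erase X = (1-qq k) * G + qq k * (G * (1 - indN (A k) ω))
        by_cases hmem : ω ∈ A k
        · rw [indN_mem hmem]
          simp only [one_mul, tsub_self, mul_zero, add_zero]
          rw [mul_assoc, ← hG]
        · rw [indN_not_mem hmem]
          simp only [zero_mul, tsub_zero, one_mul, mul_one]
          rw [← hG, ← add_mul,
            tsub_add_cancel_of_le (show qq k ≤ 1 from hq1 k j (t + 1)), one_mul]
    have hc4 : ∑ ω, wtN v ω * ∏ ℓ, X ℓ ω = ∑ ω, wtN v ω * ∏ ℓ, Y ℓ ω := by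
      rw [← key (Finset.univ.erase j) (Finset.notMem_erase j Finset.univ)]
      refine Finset.sum_congr rfl fun ω _ => ?_
      congr 1
      have hcompl : (Finset.univ.erase j)ᶜ = ({j} : Finset (Fin N)) := by
        rw [Finset.compl_erase, Finset.compl_univ]
        rfl
      rw [hcompl, Finset.prod_singleton]
      have hqqj : qq j = 1 := by
        simp only [hqq, hq_def]
        rw [hself j (t + 1)]
        rfl
      have hDj : ω ∈ D j := Or.inl rfl
      have hXYj : X j ω = Y j ω := by
        simp only [hX, hY]
        rw [indN_mem hDj, hqqj]
      rw [hXYj, mul_comm]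
      exact Finset.mul_prod_erase Finset.univ (fun ℓ => Y ℓ ω) (Finset.mem_univ j)
    have hYant : ∀ ℓ, Antitone (Y ℓ) := by
      intro ℓ ω ω' hle
      simp only [hY]
      refine tsub_le_tsub_left (mul_le_mul_left ?_ _) 1
      unfold indN
      split
      · rename_i hmem
        rw [if_pos (show ω' ∈ A ℓ from TAccess_mono hle hmem)]
      · exact zero_le
    have hwY : ∀ ℓ, 1 - alphaN q i t ℓ * qq ℓ ≤ ∑ ω, wtN v ω * Y ℓ ω := by
      intro ℓ
      have hqql : qq ℓ ≤ 1 := hq1 ℓ j (t + 1)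
      have htot : (∑ ω, wtN v ω * Y ℓ ω) + qq ℓ * prN v (A ℓ) = 1 := by
        rw [prN, Finset.mul_sum, ← Finset.sum_add_distrib, ← wtN_total hv]
        refine Finset.sum_congr rfl fun ω _ => ?_
        have hpoint : Y ℓ ω + indN (A ℓ) ω * qq ℓ = 1 := by
          simp only [hY]
          by_cases hmem : ω ∈ A ℓ
          · rw [indN_mem hmem, one_mul]
            exact tsub_add_cancel_of_le hqql
          · rw [indN_not_mem hmem, zero_mul, tsub_zero, add_zero]
        calc wtN v ω * Y ℓ ω + qq ℓ * (wtN v ω * indN (A ℓ) ω)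
            = wtN v ω * (Y ℓ ω + indN (A ℓ) ω * qq ℓ) := by ring
          _ = wtN v ω := by rw [hpoint, mul_one]
      rw [eq_tsub_of_add_eq htot]
      refine tsub_le_tsub_left ?_ 1
      calc qq ℓ * prN v (A ℓ) ≤ qq ℓ * alphaN q i t ℓ := mul_le_mul_right (hIH ℓ) _
        _ = alphaN q i t ℓ * qq ℓ := mul_comm _ _
    have hprod : ∏ ℓ, (1 - alphaN q i t ℓ * qq ℓ) ≤ prN v Uᶜ := by
      calc ∏ ℓ, (1 - alphaN q i t ℓ * qq ℓ) ≤ ∏ ℓ, (∑ ω, wtN v ω * Y ℓ ω) :=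
          Finset.prod_le_prod' fun ℓ _ => hwY ℓ
        _ ≤ ∑ ω, wtN v ω * ∏ ℓ, Y ℓ ω := harrisN hv Y hYant Finset.univ
        _ = ∑ ω, wtN v ω * ∏ ℓ, X ℓ ω := hc4.symm
        _ = prN v Uᶜ := hc3.symm
    calc prN v {ω : TempConfig N T | TAccess i j (t + 1 + 1) ω} ≤ prN v U := prN_mono hc1
      _ = 1 - prN v Uᶜ := eq_tsub_of_add_eq hc2
      _ ≤ 1 - ∏ ℓ, (1 - alphaN q i t ℓ * qq ℓ) := tsub_le_tsub_left hprod 1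
      _ = alphaN q i (t + 1) j := by rw [alphaN]

/-- Upper bound on the accessibility probability: under the waiting convention
`p_{ℓℓ}(t) = 1` (whence `α_{ii}(t) = 1`), for every `i, j` and every horizon
`T = S + 1 ≥ 1` we have `P(i →^T j) ≤ α_{ij}(T)`. -/
theorem access_prob_le_alpha (N : ℕ) (p : Fin N → Fin N → ℕ → ℝ≥0∞)
    (hp : ∀ u v t, p u v t ≤ 1) (hself : ∀ ℓ : Fin N, ∀ t, p ℓ ℓ t = 1) :
    ∀ (i j : Fin N) (S : ℕ),
      tempMeasure N (S + 1) p hp {ω | TAccess i j (S + 1) ω} ≤ alphaE p i S j := by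
  intro i j S
  rw [tempMeasure_eq_prN p hp, ← alphaN_coe p hp i S j]
  exact ENNReal.coe_le_coe.mpr (mainN p hp hself i S (Nat.lt_succ_self S) j)
end
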